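/- Let G be a nonabelian torsion-free nilpotent group and let σ be an involution on G. Then G contains a σ-invariant Heisenberg subgroup; more precisely, there exist x, y ∈ G such that [x,y] ≠ 1, [x,[x,y]] = 1, [y,[x,y]] = 1, σ(x) ∈ {x, x⁻¹}, and σ(y) ∈ {y, y⁻¹}. -/

import Mathlib

open Subgroup

universe u

/-- From `a * b = b * a` derive the commutator form. -/
private lemma comm_to_one {G : Type u} [Group G] {a b : G} (h : a * b = b * a) :
    a⁻¹ * b⁻¹ * a * b = 1 := by
  have : a⁻¹ * b⁻¹ * (a * b) = a⁻¹ * b⁻¹ * (b * a) := by rw [h]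
  calc a⁻¹ * b⁻¹ * a * b = a⁻¹ * b⁻¹ * (a * b) := by group
    _ = a⁻¹ * b⁻¹ * (b * a) := this
    _ = 1 := by group

private lemma one_to_comm {G : Type u} [Group G] {a b : G} (h : a⁻¹ * b⁻¹ * a * b = 1) :
    a * b = b * a := by
  have h2 : (b * a) * (a⁻¹ * b⁻¹ * a * b) = b * a := by rw [h, mul_one]
  calc a * b = (b * a) * (a⁻¹ * b⁻¹ * a * b) := by group
    _ = b * a := h2

private lemma comm_inv {G : Type u} [Group G] {a z : G} (h : a * z = z * a) :
    a * z⁻¹ = z⁻¹ * a := by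
  calc a * z⁻¹ = z⁻¹ * (z * a) * z⁻¹ := by group
    _ = z⁻¹ * (a * z) * z⁻¹ := by rw [h]
    _ = z⁻¹ * a := by group

/-- An involutive endomorphism preserves the center. -/
private lemma tau_center {G : Type u} [Group G] (τ : G →* G) (hττ : ∀ g, τ (τ g) = g) :
    ∀ z ∈ center G, τ z ∈ center G := by
  intro z hz
  rw [Subgroup.mem_center_iff] at hz ⊢
  intro g
  calc g * τ z = τ (τ g) * τ z := by rw [hττ]
    _ = τ (τ g * z) := by rw [map_mul]
    _ = τ (z * τ g) := by rw [hz (τ g)]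
    _ = τ z * τ (τ g) := by rw [map_mul]
    _ = τ z * g := by rw [hττ]

/-- KEY LEMMA: in a group whose upper central series reaches ⊤ at stage n, given an
involutive automorphism τ and a τ-invariant isolated proper subgroup C, there is an
eigen-element outside C. -/
private lemma key_lemma : ∀ (n : ℕ) (G : Type u) [Group G] (τ : G →* G),
    (∀ g, τ (τ g) = g) → ∀ (C : Subgroup G),
    (∀ c ∈ C, τ c ∈ C) →
    (∀ (g : G) (k : ℕ), g ^ (k + 1) ∈ C → g ∈ C) →
    C ≠ ⊤ → Subgroup.upperCentralSeries G n = ⊤ →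
    ∃ y, y ∉ C ∧ (τ y = y ∨ τ y = y⁻¹) := by
  intro n
  induction n with
  | zero =>
    intro G _ τ hττ C hCτ hiso hCtop hucs
    exfalso
    apply hCtop
    rw [eq_top_iff]
    intro g _
    have hg : g ∈ (⊥ : Subgroup G) := by
      rw [← Subgroup.upperCentralSeries_zero (G := G), hucs]; exact mem_top g
    rw [Subgroup.mem_bot] at hg
    rw [hg]; exact C.one_mem
  | succ n ih =>
    intro G _ τ hττ C hCτ hiso hCtop hucs
    by_cases hzc : center G ≤ C
    · -- quotient by the center and recurse
      have hτZ := tau_center τ hττ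
      have hcomap : center G ≤ (center G).comap τ := fun z hz => hτZ z hz
      let π := QuotientGroup.mk' (center G)
      let τQ : (G ⧸ center G) →* (G ⧸ center G) :=
        QuotientGroup.map (center G) (center G) τ hcomap
      have hτQmk : ∀ g : G, τQ ((g : G ⧸ center G)) = ((τ g : G) : G ⧸ center G) := fun g =>
        QuotientGroup.map_mk (center G) (center G) τ hcomap g
      have hτQτQ : ∀ q, τQ (τQ q) = q := by
        intro q
        induction q using QuotientGroup.induction_on with
        | H g => rw [hτQmk, hτQmk, hττ]
      let CQ : Subgroup (G ⧸ center G) := C.map π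
      have hmemCQ : ∀ g : G, (g : G ⧸ center G) ∈ CQ → g ∈ C := by
        intro g hg
        obtain ⟨c, hc, hcg⟩ := Subgroup.mem_map.mp hg
        have : (c : G ⧸ center G) = (g : G ⧸ center G) := hcg
        have hcen : c⁻¹ * g ∈ center G := QuotientGroup.eq.mp this
        have : g = c * (c⁻¹ * g) := by group
        rw [this]
        exact C.mul_mem hc (hzc hcen)
      have hCQτ : ∀ c ∈ CQ, τQ c ∈ CQ := by
        intro c hc
        obtain ⟨c₀, hc₀, rfl⟩ := Subgroup.mem_map.mp hc
        have : τQ (π c₀) = π (τ c₀) := hτQmk c₀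
        rw [this]
        exact Subgroup.mem_map.mpr ⟨τ c₀, hCτ c₀ hc₀, rfl⟩
      have hisoQ : ∀ (q : G ⧸ center G) (k : ℕ), q ^ (k + 1) ∈ CQ → q ∈ CQ := by
        intro q k hq
        induction q using QuotientGroup.induction_on with
        | H g =>
          have hpow : ((g ^ (k+1) : G) : G ⧸ center G) = (g : G ⧸ center G) ^ (k+1) :=
            π.map_pow g (k+1)
          have : (g ^ (k+1) : G) ∈ C := hmemCQ _ (by rw [hpow]; exact hq)
          exact Subgroup.mem_map.mpr ⟨g, hiso g k this, rfl⟩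
      have hCQtop : CQ ≠ ⊤ := by
        have : ∃ g : G, g ∉ C := by
          by_contra h
          push_neg at h
          exact hCtop (Subgroup.eq_top_iff' C |>.mpr h)
        obtain ⟨g, hg⟩ := this
        intro h
        exact hg (hmemCQ g (h ▸ mem_top _))
      have hucsQ : Subgroup.upperCentralSeries (G ⧸ center G) n = ⊤ := by
        rw [eq_top_iff]
        intro q _
        induction q using QuotientGroup.induction_on with
        | H g =>
          have : g ∈ comap (QuotientGroup.mk' (center G))
              (Subgroup.upperCentralSeries (G ⧸ center G) n) := by
            rw [Subgroup.comap_upperCentralSeries_quotient_center, hucs]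
            exact mem_top g
          exact this
      obtain ⟨ybar, hybarC, hybarτ⟩ := ih (G ⧸ center G) τQ hτQτQ CQ hCQτ hisoQ hCQtop hucsQ
      obtain ⟨y₀, rfl⟩ := QuotientGroup.mk'_surjective (center G) ybar
      have hy₀C : y₀ ∉ C := fun h => hybarC (Subgroup.mem_map.mpr ⟨y₀, h, rfl⟩)
      rcases hybarτ with hfix | hinv
      · -- τ y₀ = y₀ * z⁻¹ with z central; use y = y₀ * τ y₀
        have hz : (τ y₀)⁻¹ * y₀ ∈ center G := by
          have : ((τ y₀ : G) : G ⧸ center G) = ((y₀ : G) : G ⧸ center G) := by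
            rw [← hτQmk]; exact hfix
          exact QuotientGroup.eq.mp this
        have hzcomm : ∀ g, g * ((τ y₀)⁻¹ * y₀) = ((τ y₀)⁻¹ * y₀) * g :=
          Subgroup.mem_center_iff.mp hz
        set z : G := (τ y₀)⁻¹ * y₀ with hzdef
        have hτy₀ : τ y₀ = y₀ * z⁻¹ := by rw [hzdef]; group
        have hc : y₀ * z⁻¹ = z⁻¹ * y₀ := comm_inv (hzcomm y₀)
        refine ⟨y₀ * τ y₀, ?_, Or.inl ?_⟩
        · intro h
          apply hy₀C
          apply hiso y₀ 1
          have hpow2 : y₀ ^ (1+1) = (y₀ * τ y₀) * z := by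
            rw [hτy₀, pow_succ, pow_one]; group
          rw [hpow2]
          exact C.mul_mem h (hzc hz)
        · rw [map_mul, hττ, hτy₀]
          calc (y₀ * z⁻¹) * y₀ = y₀ * (z⁻¹ * y₀) := by group
            _ = y₀ * (y₀ * z⁻¹) := by rw [← hc]
      · -- use y = y₀ * (τ y₀)⁻¹, always inverted by τ
        have hz : y₀ * τ y₀ ∈ center G := by
          have h1 : ((τ y₀ : G) : G ⧸ center G) = ((y₀ : G) : G ⧸ center G)⁻¹ := by
            rw [← hτQmk]; exact hinv
          have : ((y₀ * τ y₀ : G) : G ⧸ center G) = 1 := by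
            calc ((y₀ * τ y₀ : G) : G ⧸ center G)
                = ((y₀ : G) : G ⧸ center G) * ((τ y₀ : G) : G ⧸ center G) := rfl
              _ = ((y₀ : G) : G ⧸ center G) * ((y₀ : G) : G ⧸ center G)⁻¹ := by rw [h1]
              _ = 1 := mul_inv_cancel _
          exact (QuotientGroup.eq_one_iff _).mp this
        have hzcomm : ∀ g, g * (y₀ * τ y₀) = (y₀ * τ y₀) * g :=
          Subgroup.mem_center_iff.mp hz
        refine ⟨y₀ * (τ y₀)⁻¹, ?_, Or.inr ?_⟩
        · intro h
          apply hy₀C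
          apply hiso y₀ 1
          have hzc2 : (τ y₀)⁻¹ * (y₀ * τ y₀) = (y₀ * τ y₀) * (τ y₀)⁻¹ := hzcomm (τ y₀)⁻¹
          have hpow2 : y₀ ^ (1+1) = (y₀ * (τ y₀)⁻¹) * (y₀ * τ y₀) := by
            calc y₀ ^ (1+1) = y₀ * ((y₀ * τ y₀) * (τ y₀)⁻¹) := by rw [pow_succ, pow_one]; group
              _ = y₀ * ((τ y₀)⁻¹ * (y₀ * τ y₀)) := by rw [← hzc2]
              _ = (y₀ * (τ y₀)⁻¹) * (y₀ * τ y₀) := by group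
          rw [hpow2]
          exact C.mul_mem h (hzc hz)
        · rw [map_mul, map_inv, hττ]
          group
    · -- a central element outside C: direct construction
      obtain ⟨z, hzZ, hzC⟩ := SetLike.not_le_iff_exists.mp hzc
      have hτz : τ z ∈ center G := tau_center τ hττ z hzZ
      have hτzcomm : ∀ g, g * τ z = τ z * g := Subgroup.mem_center_iff.mp hτz
      have hsq : z * τ z * (z * (τ z)⁻¹) = z ^ (1+1) := by
        rw [show z * τ z * (z * (τ z)⁻¹) = z * (τ z * z) * (τ z)⁻¹ by group,
          ← hτzcomm z, pow_succ, pow_one]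
        group
      have hz2 : z ^ (1+1) ∉ C := fun h => hzC (hiso z 1 h)
      by_cases hs : z * τ z ∈ C
      · refine ⟨z * (τ z)⁻¹, ?_, Or.inr ?_⟩
        · intro h
          exact hz2 (hsq ▸ C.mul_mem hs h)
        · rw [map_mul, map_inv, hττ]
          group
      · refine ⟨z * τ z, fun h => hs h, Or.inl ?_⟩
        rw [map_mul, hττ]
        exact (hτzcomm z).symm

private lemma comm_to_one2 {G : Type u} [Group G] {a b : G} (h : a * b = b * a) :
    a * b * a⁻¹ * b⁻¹ = 1 := by
  rw [h]; group

private lemma one_to_comm2 {G : Type u} [Group G] {a b : G} (h : a * b * a⁻¹ * b⁻¹ = 1) :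
    b * a = a * b := by
  have h2 : a * b = ((a * b * a⁻¹ * b⁻¹) * (b * a)) := by group
  rw [h, one_mul] at h2
  exact h2.symm

/-- Torsion-free monoid, as in the older Mathlib (removed since). -/
def Monoid.IsTorsionFree (G : Type*) [Monoid G] : Prop :=
  ∀ g : G, g ≠ 1 → ¬IsOfFinOrder g

/-- a nonabelian torsion-free nilpotent group with an involution σ
contains a σ-invariant Heisenberg subgroup: there are x, y with [x,y] ≠ 1,
[x,[x,y]] = [y,[x,y]] = 1, σ x ∈ {x, x⁻¹} and σ y ∈ {y, y⁻¹}. -/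
theorem stmt_7 (G : Type*) [Group G]
    (hnonab : ∃ g₁ g₂ : G, g₁ * g₂ ≠ g₂ * g₁)
    (htf : Monoid.IsTorsionFree G)
    (hnilp : Group.IsNilpotent G)
    (σ : G → G)
    (hσanti : ∀ g₁ g₂ : G, σ (g₁ * g₂) = σ g₂ * σ g₁)
    (hσinvol : ∀ g : G, σ (σ g) = g) :
    ∃ x y : G, x⁻¹ * y⁻¹ * x * y ≠ 1 ∧
      x⁻¹ * (x⁻¹ * y⁻¹ * x * y)⁻¹ * x * (x⁻¹ * y⁻¹ * x * y) = 1 ∧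
      y⁻¹ * (x⁻¹ * y⁻¹ * x * y)⁻¹ * y * (x⁻¹ * y⁻¹ * x * y) = 1 ∧
      (σ x = x ∨ σ x = x⁻¹) ∧ (σ y = y ∨ σ y = y⁻¹) := by
  classical
  haveI := hnilp
  -- basic properties of σ
  have hσ1 : σ 1 = 1 := by
    have h := hσanti 1 1
    rw [one_mul] at h
    exact (left_eq_mul.mp h)
  have hσinv : ∀ g : G, σ g⁻¹ = (σ g)⁻¹ := by
    intro g
    have h : σ g * σ g⁻¹ = 1 := by rw [← hσanti, inv_mul_cancel, hσ1]
    exact eq_inv_of_mul_eq_one_right h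
  -- the involutive automorphism τ
  let τ : G →* G := MonoidHom.mk' (fun g => (σ g)⁻¹) (by
    intro a b
    show (σ (a * b))⁻¹ = (σ a)⁻¹ * (σ b)⁻¹
    rw [hσanti, mul_inv_rev])
  have hτval : ∀ g : G, τ g = (σ g)⁻¹ := fun _ => rfl
  have hττ : ∀ g : G, τ (τ g) = g := by
    intro g
    rw [hτval, hτval, hσinv, hσinvol, inv_inv]
  have hτZ := tau_center τ hττ
  -- membership in the second center
  have hmem2 : ∀ x : G, x ∈ Subgroup.upperCentralSeries G 2 ↔
      ∀ y : G, x * y * x⁻¹ * y⁻¹ ∈ center G := by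
    intro x
    have h := Subgroup.mem_upperCentralSeries_succ_iff (G := G) (n := 1) (x := x)
    rwa [Subgroup.upperCentralSeries_one] at h
  -- the second center is strictly bigger than the center
  have hZ2ne : ∃ x, x ∈ Subgroup.upperCentralSeries G 2 ∧ x ∉ center G := by
    by_contra hcon
    push_neg at hcon
    have hstep : ∀ m : ℕ, Subgroup.upperCentralSeries G (m + 1) ≤ center G := by
      intro m
      induction m with
      | zero => rw [Subgroup.upperCentralSeries_one]
      | succ m ihm =>
        intro x hx
        apply hcon
        rw [hmem2]
        intro y
        exact ihm (Subgroup.mem_upperCentralSeries_succ_iff.mp hx y)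
    obtain ⟨N, hN⟩ := hnilp.nilpotent'
    obtain ⟨g₁, g₂, hg⟩ := hnonab
    apply hg
    have hg₁ : g₁ ∈ center G := by
      cases N with
      | zero =>
        have h1 : g₁ ∈ (⊥ : Subgroup G) := by
          rw [← Subgroup.upperCentralSeries_zero (G := G), hN]; exact mem_top _
        rw [Subgroup.mem_bot] at h1
        rw [h1]; exact (center G).one_mem
      | succ m => exact hstep m (by rw [hN]; exact mem_top g₁)
    exact (Subgroup.mem_center_iff.mp hg₁ g₂).symm
  -- torsion-freeness in usable form
  have htfpow : ∀ (c : G) (k : ℕ), c ^ (k + 1) = 1 → c = 1 := by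
    intro c k hc
    by_contra hne
    exact htf c hne (isOfFinOrder_iff_pow_eq_one.mpr ⟨k + 1, Nat.succ_pos k, hc⟩)
  -- commutators with second-center elements are multiplicative in powers
  have hcomm_pow : ∀ x ∈ Subgroup.upperCentralSeries G 2, ∀ (y : G) (m : ℕ),
      x ^ m * y * (x ^ m)⁻¹ * y⁻¹ = (x * y * x⁻¹ * y⁻¹) ^ m := by
    intro x hx y m
    induction m with
    | zero => simp
    | succ m ihm =>
      have hc : (x * y * x⁻¹ * y⁻¹) ∈ center G := (hmem2 x).mp hx y
      have hcm : (x * y * x⁻¹ * y⁻¹) ^ m ∈ center G := Subgroup.pow_mem _ hc m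
      have hcmx := Subgroup.mem_center_iff.mp hcm x
      calc x ^ (m+1) * y * (x ^ (m+1))⁻¹ * y⁻¹
          = x * (x ^ m * y * (x ^ m)⁻¹ * y⁻¹) * (y * x⁻¹ * y⁻¹) := by
            rw [pow_succ']; group
        _ = x * (x * y * x⁻¹ * y⁻¹) ^ m * (y * x⁻¹ * y⁻¹) := by rw [ihm]
        _ = (x * y * x⁻¹ * y⁻¹) ^ m * (x * y * x⁻¹ * y⁻¹) := by
            rw [← mul_assoc, hcmx]; group
        _ = (x * y * x⁻¹ * y⁻¹) ^ (m+1) := by rw [pow_succ]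
  -- the center is isolated in the second center
  have hZ2iso : ∀ x ∈ Subgroup.upperCentralSeries G 2, ∀ k : ℕ,
      x ^ (k + 1) ∈ center G → x ∈ center G := by
    intro x hx k hxk
    rw [Subgroup.mem_center_iff]
    intro y
    have h1 : x ^ (k+1) * y * (x ^ (k+1))⁻¹ * y⁻¹ = 1 :=
      comm_to_one2 (Subgroup.mem_center_iff.mp hxk y).symm
    rw [hcomm_pow x hx y (k+1)] at h1
    have h2 : x * y * x⁻¹ * y⁻¹ = 1 := htfpow _ k h1
    exact one_to_comm2 h2
  -- τ preserves the second center
  have hτZ2 : ∀ x ∈ Subgroup.upperCentralSeries G 2, τ x ∈ Subgroup.upperCentralSeries G 2 := by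
    intro x hx
    rw [hmem2]
    intro y
    have h1 : x * (τ y) * x⁻¹ * (τ y)⁻¹ ∈ center G := (hmem2 x).mp hx (τ y)
    have h2 : τ (x * τ y * x⁻¹ * (τ y)⁻¹) ∈ center G := hτZ _ h1
    have h3 : τ (x * τ y * x⁻¹ * (τ y)⁻¹) = τ x * y * (τ x)⁻¹ * y⁻¹ := by
      rw [map_mul, map_mul, map_mul, map_inv, map_inv, hττ]
    rwa [h3] at h2
  -- apply the key lemma inside the second center to find x
  obtain ⟨nn, hnn⟩ := Group.IsNilpotent.nilpotent (↥(Subgroup.upperCentralSeries G 2))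
  let τ₂ : ↥(Subgroup.upperCentralSeries G 2) →* ↥(Subgroup.upperCentralSeries G 2) :=
    (τ.comp (Subgroup.upperCentralSeries G 2).subtype).codRestrict _ (fun a => hτZ2 a.1 a.2)
  have hτ₂val : ∀ a : ↥(Subgroup.upperCentralSeries G 2), ((τ₂ a : G)) = τ (a : G) := fun _ => rfl
  have hτ₂τ₂ : ∀ a, τ₂ (τ₂ a) = a := fun a => Subtype.ext (hττ (a : G))
  let C' : Subgroup ↥(Subgroup.upperCentralSeries G 2) :=
    (center G).comap (Subgroup.upperCentralSeries G 2).subtype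
  have hmemC' : ∀ a : ↥(Subgroup.upperCentralSeries G 2), a ∈ C' ↔ (a : G) ∈ center G :=
    fun a => Iff.rfl
  have hC'τ : ∀ c ∈ C', τ₂ c ∈ C' := by
    intro c hc
    rw [hmemC'] at hc ⊢
    rw [hτ₂val]
    exact hτZ _ hc
  have hC'iso : ∀ (a : ↥(Subgroup.upperCentralSeries G 2)) (k : ℕ), a ^ (k+1) ∈ C' → a ∈ C' := by
    intro a k h
    rw [hmemC'] at h ⊢
    rw [SubmonoidClass.coe_pow] at h
    exact hZ2iso (a : G) a.2 k h
  have hC'top : C' ≠ ⊤ := by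
    obtain ⟨x0, hx0Z2, hx0nc⟩ := hZ2ne
    intro h
    apply hx0nc
    have : (⟨x0, hx0Z2⟩ : ↥(Subgroup.upperCentralSeries G 2)) ∈ C' := h ▸ mem_top _
    exact (hmemC' _).mp this
  obtain ⟨x', hx'C, hx'τ⟩ := key_lemma nn ↥(Subgroup.upperCentralSeries G 2) τ₂ hτ₂τ₂ C' hC'τ hC'iso hC'top hnn
  set x : G := (x' : G) with hxdef
  have hxZ2 : x ∈ Subgroup.upperCentralSeries G 2 := x'.2
  have hxnc : x ∉ center G := fun h => hx'C ((hmemC' x').mpr h)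
  have hτx : τ x = x ∨ τ x = x⁻¹ := by
    rcases hx'τ with h | h
    · left
      have := congrArg (Subtype.val) h
      rw [hτ₂val] at this
      exact this
    · right
      have := congrArg (Subtype.val) h
      rw [hτ₂val] at this
      exact this
  -- the commutator homomorphism with x
  have hφc : ∀ a : G, x⁻¹ * a⁻¹ * x * a ∈ center G := by
    intro a
    have hxinv : x⁻¹ ∈ Subgroup.upperCentralSeries G 2 := Subgroup.inv_mem _ hxZ2
    have h := (hmem2 x⁻¹).mp hxinv a⁻¹
    simp only [inv_inv] at h
    exact h
  let φ : G →* G := MonoidHom.mk' (fun a => x⁻¹ * a⁻¹ * x * a) (by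
    intro a b
    have hca := Subgroup.mem_center_iff.mp (hφc a)
    calc x⁻¹ * (a * b)⁻¹ * x * (a * b)
        = x⁻¹ * b⁻¹ * x * ((x⁻¹ * a⁻¹ * x * a) * b) := by group
      _ = x⁻¹ * b⁻¹ * x * (b * (x⁻¹ * a⁻¹ * x * a)) := by rw [← hca b]
      _ = (x⁻¹ * b⁻¹ * x * b) * (x⁻¹ * a⁻¹ * x * a) := by group
      _ = (x⁻¹ * a⁻¹ * x * a) * (x⁻¹ * b⁻¹ * x * b) := hca _)
  have hφval : ∀ a : G, φ a = x⁻¹ * a⁻¹ * x * a := fun _ => rfl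
  have hCiff : ∀ a : G, a ∈ φ.ker ↔ x⁻¹ * a⁻¹ * x * a = 1 := fun a => MonoidHom.mem_ker
  have hCτ : ∀ c ∈ φ.ker, τ c ∈ φ.ker := by
    intro c hc
    rw [hCiff] at hc
    have hcomm : x * c = c * x := one_to_comm hc
    have h2 : τ x * τ c = τ c * τ x := by rw [← map_mul, ← map_mul, hcomm]
    have h3 : x * τ c = τ c * x := by
      rcases hτx with h | h
      · rwa [h] at h2
      · rw [h] at h2
        calc x * τ c = x * (τ c * x⁻¹) * x := by group
          _ = x * (x⁻¹ * τ c) * x := by rw [← h2]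
          _ = τ c * x := by group
    rw [hCiff]
    exact comm_to_one h3
  have hCiso : ∀ (a : G) (k : ℕ), a ^ (k+1) ∈ φ.ker → a ∈ φ.ker := by
    intro a k h
    rw [MonoidHom.mem_ker, map_pow] at h
    rw [MonoidHom.mem_ker]
    exact htfpow _ k h
  have hCtop : φ.ker ≠ ⊤ := by
    have hex : ∃ g : G, ¬ (g * x = x * g) := by
      by_contra h
      push_neg at h
      exact hxnc (Subgroup.mem_center_iff.mpr h)
    obtain ⟨g, hgx⟩ := hex
    intro h
    apply hgx
    have hgC : g ∈ φ.ker := h ▸ mem_top g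
    exact (one_to_comm ((hCiff g).mp hgC)).symm
  obtain ⟨N, hN⟩ := hnilp.nilpotent'
  obtain ⟨y, hyC, hyτ⟩ := key_lemma N G τ hττ φ.ker hCτ hCiso hCtop hN
  -- conclusion
  have hk := Subgroup.mem_center_iff.mp (hφc y)
  refine ⟨x, y, ?_, ?_, ?_, ?_, ?_⟩
  · intro h
    exact hyC ((hCiff y).mpr h)
  · exact comm_to_one (hk x)
  · exact comm_to_one (hk y)
  · rcases hτx with h | h
    · have h' : (σ x)⁻¹ = x := h
      exact Or.inr (inv_eq_iff_eq_inv.mp h')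
    · have h' : (σ x)⁻¹ = x⁻¹ := h
      exact Or.inl (inv_injective h')
  · rcases hyτ with h | h
    · have h' : (σ y)⁻¹ = y := h
      exact Or.inr (inv_eq_iff_eq_inv.mp h')
    · have h' : (σ y)⁻¹ = y⁻¹ := h
      exact Or.inl (inv_injective h')
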